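/- For any real x and real a > 0, one has |x|^a · sgn(x) = (Γ(a+1)/(2πi)) ∫_{1+iℝ} (e^{zx} − e^{-zx})/z^{a+1} dz, where the contour runs from 1-i∞ to 1+i∞ and z^{a+1} is the principal branch. -/

import Mathlib

open Complex MeasureTheory Real Set Filter FourierTransform
open scoped Topology

lemma intOnR {c s : ℝ} (hc : 0 < c) (hs : -1 < s) :
    IntegrableOn (fun u : ℝ => u ^ s * Real.exp (-(c * u))) (Ioi 0) := by
  simpa [neg_mul] using integrableOn_rpow_mul_exp_neg_mul_rpow (p := 1) hs zero_lt_one hc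

lemma contCpow {s : ℝ} : ContinuousOn (fun u : ℝ => (u : ℂ) ^ (s : ℂ)) (Ioi 0) :=
  fun u hu => (Complex.continuousAt_ofReal_cpow_const u _ (Or.inr (ne_of_gt hu))).continuousWithinAt

lemma contOnC {s : ℝ} {b : ℂ} :
    ContinuousOn (fun u : ℝ => (u : ℂ) ^ (s : ℂ) * Complex.exp (-(b * u))) (Ioi 0) :=
  contCpow.mul (Continuous.continuousOn (by fun_prop))

lemma normC {s : ℝ} {b : ℂ} {u : ℝ} (hu : 0 < u) :
    ‖(u : ℂ) ^ (s : ℂ) * Complex.exp (-(b * u))‖ = u ^ s * Real.exp (-(b.re * u)) := by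
  rw [norm_mul, Complex.norm_cpow_real,
    Complex.norm_exp]
  simp [Complex.norm_of_nonneg hu.le, abs_of_pos hu]

lemma intOnC {s : ℝ} {b : ℂ} (hb : 0 < b.re) (hs : -1 < s) :
    IntegrableOn (fun u : ℝ => (u : ℂ) ^ (s : ℂ) * Complex.exp (-(b * u))) (Ioi 0) := by
  refine ((intOnR hb hs).mono' (contOnC.aestronglyMeasurable measurableSet_Ioi) ?_)
  filter_upwards [ae_restrict_mem measurableSet_Ioi] with u hu
  rw [normC hu]

lemma hasDeriv_laplace {s : ℝ} (hs : -1 < s) {b : ℂ} (hb : 0 < b.re) :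
    HasDerivAt (fun b' : ℂ => ∫ u : ℝ in Ioi 0, (u : ℂ) ^ (s : ℂ) * Complex.exp (-(b' * u)))
      (∫ u : ℝ in Ioi 0, (u : ℂ) ^ (s : ℂ) * (Complex.exp (-(b * u)) * -(u:ℂ))) b := by
  have ε_pos : 0 < b.re / 2 := by linarith
  have key := hasDerivAt_integral_of_dominated_loc_of_deriv_le (μ := volume.restrict (Ioi 0))
    (F := fun b' : ℂ => fun u : ℝ => (u : ℂ) ^ (s : ℂ) * Complex.exp (-(b' * u)))
    (F' := fun b' : ℂ => fun u : ℝ => (u : ℂ) ^ (s : ℂ) * (Complex.exp (-(b' * u)) * -(u:ℂ)))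
    (x₀ := b) (bound := fun u : ℝ => u ^ (s+1) * Real.exp (-(b.re/2 * u))) (Metric.ball_mem_nhds b ε_pos)
    ?_ ?_ ?_ ?_ ?_ ?_
  · exact key.2
  · exact Eventually.of_forall fun b' =>
      (contOnC.aestronglyMeasurable measurableSet_Ioi)
  · exact intOnC hb hs
  · apply ContinuousOn.aestronglyMeasurable _ measurableSet_Ioi
    exact contCpow.mul (Continuous.continuousOn (by fun_prop))
  · filter_upwards [ae_restrict_mem measurableSet_Ioi] with u hu b' hb'
    have hu' : (0:ℝ) < u := hu
    have hre : b.re / 2 ≤ b'.re := by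
      have h1 : |(b' - b).re| ≤ ‖b' - b‖ := Complex.abs_re_le_norm _
      rw [Metric.mem_ball, Complex.dist_eq] at hb'
      have := abs_le.mp (h1.trans hb'.le)
      simp only [Complex.sub_re] at this
      linarith [this.1]
    rw [norm_mul, norm_mul, norm_neg]
    rw [Complex.norm_cpow_real,
      Complex.norm_exp]
    simp only [Complex.neg_re, Complex.mul_re, Complex.ofReal_re, Complex.ofReal_im,
      mul_zero, sub_zero, Complex.norm_real, Real.norm_eq_abs]
    rw [_root_.abs_of_nonneg hu'.le,
      Real.rpow_add_one (ne_of_gt hu')]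
    have hexp : Real.exp (-(b'.re * u)) ≤ Real.exp (-(b.re/2 * u)) := by
      apply Real.exp_le_exp.mpr; nlinarith
    calc u ^ s * (Real.exp (-(b'.re * u)) * u) = u ^ s * u * Real.exp (-(b'.re * u)) := by ring
      _ ≤ u ^ s * u * Real.exp (-(b.re/2 * u)) :=
          mul_le_mul_of_nonneg_left hexp (by positivity)
  · exact intOnR ε_pos (by linarith)
  · filter_upwards [ae_restrict_mem measurableSet_Ioi] with u _ b' _
    have h0 : HasDerivAt (fun b'' : ℂ => b'' * u) u b' := hasDerivAt_mul_const _
    exact ((h0.neg.cexp)).const_mul _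

lemma laplaceGamma {s : ℝ} (hs : -1 < s) {b : ℂ} (hb : 0 < b.re) :
    ∫ u : ℝ in Ioi 0, (u : ℂ) ^ (s : ℂ) * Complex.exp (-(b * u)) =
      Complex.Gamma ((s : ℂ) + 1) / b ^ ((s : ℂ) + 1) := by
  set U : Set ℂ := {z | 0 < z.re} with hU
  have hUopen : IsOpen U := isOpen_lt continuous_const Complex.continuous_re
  have hFa : AnalyticOnNhd ℂ
      (fun b' : ℂ => ∫ u : ℝ in Ioi 0, (u : ℂ) ^ (s : ℂ) * Complex.exp (-(b' * u))) U := by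
    apply DifferentiableOn.analyticOnNhd _ hUopen
    intro z hz
    exact (hasDeriv_laplace hs hz).differentiableAt.differentiableWithinAt
  have hGa : AnalyticOnNhd ℂ
      (fun b' : ℂ => Complex.Gamma ((s : ℂ) + 1) / b' ^ ((s : ℂ) + 1)) U := by
    apply DifferentiableOn.analyticOnNhd _ hUopen
    intro z hz
    have hz' : 0 < z.re := hz
    have hzne : z ≠ 0 := fun h => by rw [h] at hz'; simp at hz'
    have hslit : z ∈ Complex.slitPlane := Complex.mem_slitPlane_iff.mpr (Or.inl hz')
    have hd : DifferentiableAt ℂ (fun z : ℂ => z ^ ((s : ℂ) + 1)) z :=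
      differentiableAt_id.cpow (differentiableAt_const _) hslit
    have hne : z ^ ((s : ℂ) + 1) ≠ 0 := by
      rw [Ne, Complex.cpow_eq_zero_iff]; rintro ⟨h, -⟩; exact hzne h
    exact ((differentiableAt_const _).div hd hne).differentiableWithinAt
  have hreal : ∀ r : ℝ, 0 < r →
      (∫ u : ℝ in Ioi 0, (u : ℂ) ^ (s : ℂ) * Complex.exp (-((r : ℂ) * u))) =
        Complex.Gamma ((s : ℂ) + 1) / (r : ℂ) ^ ((s : ℂ) + 1) := by
    intro r hr
    have h := integral_cpow_mul_exp_neg_mul_Ioi (a := (s : ℂ) + 1)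
      (by simp; linarith) hr
    simp only [add_sub_cancel_right] at h
    rw [h, one_div, Complex.inv_cpow _ _ (by
      rw [Complex.arg_ofReal_of_nonneg hr.le]; exact Real.pi_ne_zero.symm),
      mul_comm, div_eq_mul_inv]
  have hfreq : ∃ᶠ z in 𝓝[≠] (1 : ℂ),
      (∫ u : ℝ in Ioi 0, (u : ℂ) ^ (s : ℂ) * Complex.exp (-(z * u))) =
        Complex.Gamma ((s : ℂ) + 1) / z ^ ((s : ℂ) + 1) := by
    have hseq : Tendsto (fun n : ℕ => ((1 + ((n:ℝ)+1)⁻¹ : ℝ) : ℂ)) atTop (𝓝[≠] (1 : ℂ)) := by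
      rw [tendsto_nhdsWithin_iff]
      constructor
      · have h1 : Tendsto (fun n : ℕ => (1 + ((n:ℝ)+1)⁻¹ : ℝ)) atTop (𝓝 1) := by
          have h0 : Tendsto (fun n : ℕ => ((n:ℝ)+1)⁻¹) atTop (𝓝 0) :=
            tendsto_one_div_add_atTop_nhds_zero_nat.congr (by intro n; rw [one_div])
          simpa using tendsto_const_nhds.add h0
        have := (Complex.continuous_ofReal.tendsto 1).comp h1
        simpa [Function.comp_def] using this
      · apply Eventually.of_forall
        intro n
        simp only [mem_compl_iff, mem_singleton_iff]
        intro h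
        have h2 : (1 + ((n:ℝ)+1)⁻¹ : ℝ) = 1 := by exact_mod_cast h
        have h3 : ((n:ℝ)+1)⁻¹ = 0 := by linarith
        exact (by positivity : (0:ℝ) < ((n:ℝ)+1)⁻¹).ne' h3
    apply hseq.frequently
    apply Frequently.of_forall
    intro n
    exact hreal _ (by positivity)
  have := hFa.eqOn_of_preconnected_of_frequently_eq hGa
    ((convex_halfSpace_re_gt 0).isPreconnected) (by simp [hU] : (1:ℂ) ∈ U) hfreq
  exact this hb

noncomputable def gfun (a : ℝ) : ℝ → ℂ :=
  Set.indicator (Ioi 0) (fun u => (u : ℂ) ^ (a : ℂ) * Complex.exp (-(u : ℂ)))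

lemma gfun_integrable {a : ℝ} (ha : -1 < a) : Integrable (gfun a) := by
  have h := (intOnC (b := 1) (by simp) ha)
  simp_rw [one_mul] at h
  exact h.integrable_indicator measurableSet_Ioi

lemma gfun_continuousAt {a : ℝ} (ha : 0 < a) {y : ℝ} (hy : y ≠ 0) :
    ContinuousAt (gfun a) y := by
  rcases hy.lt_or_gt with h | h
  · have hev : gfun a =ᶠ[𝓝 y] (fun _ => (0:ℂ)) := by
      filter_upwards [Iio_mem_nhds h] with u hu
      exact Set.indicator_of_notMem (by simp [not_lt.mpr (mem_Iio.mp hu).le]) _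
    exact continuousAt_const.congr hev.symm
  · have hev : gfun a =ᶠ[𝓝 y] (fun u : ℝ => (u : ℂ) ^ (a : ℂ) * Complex.exp (-(u : ℂ))) := by
      filter_upwards [Ioi_mem_nhds h] with u hu
      exact Set.indicator_of_mem hu _
    have hc : ContinuousAt (fun u : ℝ => (u : ℂ) ^ (a : ℂ) * Complex.exp (-(u : ℂ))) y :=
      (Complex.continuousAt_ofReal_cpow_const y _ (Or.inr h.ne')).mul (by fun_prop)
    exact hc.congr hev.symm

lemma fourier_gfun {a : ℝ} (ha : -1 < a) (ξ : ℝ) :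
    𝓕 (gfun a) ξ =
      Complex.Gamma ((a : ℂ) + 1) / ((1 : ℂ) + (2 * π * ξ : ℝ) * I) ^ ((a : ℂ) + 1) := by
  rw [Real.fourier_eq']
  have hb : (0:ℝ) < ((1 : ℂ) + (2 * π * ξ : ℝ) * I).re := by simp
  have key := laplaceGamma ha hb
  rw [← key]
  have hpt : ∀ v : ℝ, Complex.exp (↑(-2 * π * (v * ξ)) * I) * gfun a v
      = (Ioi 0).indicator
        (fun v : ℝ => Complex.exp (↑(-2 * π * (v * ξ)) * I) *
          ((v : ℂ) ^ (a : ℂ) * Complex.exp (-(v : ℂ)))) v := by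
    intro v
    by_cases h : v ∈ Ioi 0 <;> simp [gfun, Set.indicator_apply, h]
  simp_rw [smul_eq_mul, real_inner_comm ξ, RCLike.inner_apply, conj_trivial, hpt]
  rw [integral_indicator measurableSet_Ioi]
  apply setIntegral_congr_fun measurableSet_Ioi
  intro v hv
  show Complex.exp (↑(-2 * π * (v * ξ)) * I) * ((v:ℂ) ^ (a:ℂ) * Complex.exp (-(v:ℂ)))
      = (v:ℂ) ^ (a:ℂ) * Complex.exp (-((1 + (2 * π * ξ:ℝ) * I) * v))
  rw [mul_comm (Complex.exp _) _, mul_assoc, ← Complex.exp_add]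
  congr 2
  push_cast
  ring

lemma integrable_of_bound {f : ℝ → ℂ} (hf : AEStronglyMeasurable f volume) {a : ℝ} (ha : 0 < a)
    {C : ℝ} (h : ∀ t : ℝ, ‖f t‖ ≤ C * (1 + |t|) ^ (-(a + 1))) : Integrable f := by
  have h1 : Integrable (fun t : ℝ => C * (1 + ‖t‖) ^ (-(a + 1))) :=
    (integrable_one_add_norm (E := ℝ) (r := a + 1) (by simp; linarith)).const_mul C
  exact h1.mono' hf (Eventually.of_forall fun t => by simpa [Real.norm_eq_abs] using h t)

lemma div_bound {A D p : ℝ} (hA : 0 ≤ A) {x : ℝ} (hx : 1 + |x| ≤ 2 * D) (hD : 0 < D)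
    (hp : 0 < p) : A / D ^ p ≤ A * 2 ^ p * (1 + |x|) ^ (-p) := by
  have h1 : (1 + |x|) ^ p ≤ 2 ^ p * D ^ p := by
    rw [← Real.mul_rpow (by norm_num) hD.le]
    exact Real.rpow_le_rpow (by positivity) hx hp.le
  rw [Real.rpow_neg (by positivity), ← div_eq_mul_inv,
    div_le_div_iff₀ (by positivity) (by positivity)]
  calc A * (1 + |x|) ^ p ≤ A * (2 ^ p * D ^ p) := mul_le_mul_of_nonneg_left h1 hA
    _ = A * 2 ^ p * D ^ p := by ring

lemma abs_one_add_mul_I (r : ℝ) : ‖(1 : ℂ) + (r : ℝ) * I‖ = Real.sqrt (1 + r ^ 2) := by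
  rw [Complex.norm_def, Complex.normSq_apply]
  simp
  ring_nf

lemma one_add_abs_le {t r : ℝ} (h : |t| ≤ |r|) :
    1 + |t| ≤ 2 * ‖(1 : ℂ) + (r : ℝ) * I‖ := by
  rw [abs_one_add_mul_I]
  have hnn := Real.sqrt_nonneg (1 + r ^ 2)
  have hsq := Real.sq_sqrt (show (0:ℝ) ≤ 1 + r ^ 2 by positivity)
  have h1 : (1:ℝ) ≤ Real.sqrt (1 + r ^ 2) := by nlinarith [sq_nonneg r]
  have h2 : |r| ≤ Real.sqrt (1 + r ^ 2) := by nlinarith [_root_.sq_abs r, abs_nonneg r]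
  linarith

lemma norm_denom {a r : ℝ} :
    ‖((1 : ℂ) + (r : ℝ) * I) ^ ((a : ℂ) + 1)‖ = ‖(1 : ℂ) + (r : ℝ) * I‖ ^ (a + 1) := by
  rw [show ((a : ℂ) + 1) = ((a + 1 : ℝ) : ℂ) by push_cast; ring,
    Complex.norm_cpow_real]

lemma denom_pos (r : ℝ) : 0 < ‖(1 : ℂ) + (r : ℝ) * I‖ := by
  rw [abs_one_add_mul_I]; positivity

lemma cont_denom {a : ℝ} : Continuous (fun r : ℝ => ((1:ℂ) + (r : ℝ) * I) ^ ((a:ℂ)+1)) := by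
  apply continuous_iff_continuousAt.mpr
  intro r
  apply ContinuousAt.comp (g := fun z : ℂ => z ^ ((a:ℂ)+1))
  · exact continuousAt_cpow_const (by apply Complex.mem_slitPlane_iff.mpr; left; simp)
  · fun_prop

lemma denom_ne {a r : ℝ} : ((1:ℂ) + (r : ℝ) * I) ^ ((a:ℂ)+1) ≠ 0 := by
  rw [Ne, Complex.cpow_eq_zero_iff]
  rintro ⟨h, -⟩
  have := congrArg Complex.re h
  simp at this

lemma fourier_gfun_integrable {a : ℝ} (ha : 0 < a) : Integrable (𝓕 (gfun a)) := by
  have hexp : Integrable (fun ξ : ℝ =>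
      Complex.Gamma ((a : ℂ) + 1) / ((1 : ℂ) + (2 * π * ξ : ℝ) * I) ^ ((a : ℂ) + 1)) := by
    apply integrable_of_bound (C := ‖Complex.Gamma ((a : ℂ) + 1)‖ * 2 ^ (a + 1)) ?_ ha ?_
    · exact (continuous_const.div (cont_denom.comp (by fun_prop))
        (fun ξ => denom_ne)).aestronglyMeasurable
    · intro ξ
      rw [norm_div, norm_denom]
      refine div_bound (norm_nonneg _) (one_add_abs_le ?_) (denom_pos _) (by linarith)
      rw [abs_mul, abs_mul]
      have h1 : (1:ℝ) ≤ |2| * |π| := by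
        rw [abs_of_pos Real.pi_pos]; simp; nlinarith [Real.pi_gt_three]
      nlinarith [abs_nonneg ξ]
  exact hexp.congr (Eventually.of_forall fun ξ => (fourier_gfun (by linarith) ξ).symm)

lemma integrable_h {a : ℝ} (ha : 0 < a) (y : ℝ) :
    Integrable (fun t : ℝ =>
      Complex.exp ((1 + (t : ℝ) * I) * y) / (1 + (t : ℝ) * I) ^ ((a : ℂ) + 1)) := by
  have hcont : Continuous (fun t : ℝ =>
      Complex.exp ((1 + (t : ℝ) * I) * y) / (1 + (t : ℝ) * I) ^ ((a : ℂ) + 1)) :=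
    (by fun_prop : Continuous fun t : ℝ => Complex.exp ((1 + (t : ℝ) * I) * y)).div
      cont_denom (fun t => denom_ne)
  apply integrable_of_bound hcont.aestronglyMeasurable ha (C := Real.exp y * 2 ^ (a + 1))
  intro t
  rw [norm_div, norm_denom, Complex.norm_exp]
  have hre : ((1 + (t : ℝ) * I) * y).re = y := by simp
  rw [hre]
  exact div_bound (Real.exp_pos y).le (one_add_abs_le le_rfl) (denom_pos _) (by linarith)

lemma Gamma_ne {a : ℝ} (ha : 0 < a) : Complex.Gamma ((a:ℂ)+1) ≠ 0 := by
  rw [show ((a:ℂ)+1) = ((a+1:ℝ):ℂ) by push_cast; ring, Complex.Gamma_ofReal]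
  exact_mod_cast (Real.Gamma_pos_of_pos (by linarith : (0:ℝ) < a+1)).ne'

lemma inv_eq {a : ℝ} (ha : 0 < a) {y : ℝ} (hy : y ≠ 0) :
    (∫ ξ : ℝ, Complex.exp (↑(2 * π * (ξ * y)) * I) *
      (Complex.Gamma ((a:ℂ)+1) / ((1:ℂ) + (2*π*ξ:ℝ) * I) ^ ((a:ℂ)+1))) = gfun a y := by
  have h1 := (gfun_integrable (by linarith : (-1:ℝ) < a)).fourierInv_fourier_eq
    (fourier_gfun_integrable ha) (gfun_continuousAt ha hy)
  rw [Real.fourierInv_eq'] at h1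
  rw [← h1]
  refine integral_congr_ae (Eventually.of_forall fun ξ => ?_)
  simp only [smul_eq_mul, real_inner_comm y, RCLike.inner_apply, conj_trivial]
  rw [fourier_gfun (by linarith : (-1:ℝ) < a) ξ]

lemma Jval {a : ℝ} (ha : 0 < a) {y : ℝ} (hy : y ≠ 0) :
    (∫ t : ℝ, Complex.exp ((1 + (t:ℝ) * I) * y) / ((1:ℂ) + (t:ℝ) * I) ^ ((a:ℂ)+1))
      = 2 * π * Complex.exp (y:ℂ) * gfun a y / Complex.Gamma ((a:ℂ)+1) := by
  have hsplit : ∀ t : ℝ, Complex.exp ((1 + (t:ℝ)*I) * y) / ((1:ℂ)+(t:ℝ)*I)^((a:ℂ)+1)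
      = Complex.exp (y:ℂ) * (Complex.exp (↑(t*y) * I) / ((1:ℂ)+(t:ℝ)*I)^((a:ℂ)+1)) := by
    intro t
    rw [show ((1:ℂ) + (t:ℝ)*I) * y = (y:ℂ) + ↑(t*y)*I by push_cast; ring, Complex.exp_add]
    ring
  simp_rw [hsplit]
  rw [integral_const_mul]
  set f : ℝ → ℂ := fun t => Complex.exp (↑(t*y) * I) / ((1:ℂ)+(t:ℝ)*I)^((a:ℂ)+1) with hf
  have h2π : (0:ℝ) < 2*π := by positivity
  have hcv := MeasureTheory.Measure.integral_comp_mul_left f (2*π)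
  have hiff : (∫ t, f t) = (2*π) • ∫ x, f (2*π*x) := by
    rw [hcv, abs_of_pos (inv_pos.mpr h2π), smul_smul, mul_inv_cancel₀ h2π.ne', one_smul]
  have hpt : ∀ ξ : ℝ, Complex.exp (↑(2*π*(ξ*y)) * I) *
      (Complex.Gamma ((a:ℂ)+1) / ((1:ℂ)+(2*π*ξ:ℝ)*I)^((a:ℂ)+1))
      = Complex.Gamma ((a:ℂ)+1) * f (2*π*ξ) := by
    intro ξ
    rw [hf]
    simp only
    rw [show ((2*π*ξ)*y : ℝ) = 2*π*(ξ*y) by ring]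
    ring
  have h3 : Complex.Gamma ((a:ℂ)+1) * ∫ x, f (2*π*x) = gfun a y := by
    rw [← integral_const_mul, ← inv_eq ha hy]
    exact integral_congr_ae (Eventually.of_forall fun ξ => (hpt ξ).symm)
  have h4 : (∫ x, f (2*π*x)) = gfun a y / Complex.Gamma ((a:ℂ)+1) := by
    rw [eq_div_iff (Gamma_ne ha), mul_comm]
    exact h3
  rw [hiff, h4, Complex.real_smul]
  push_cast
  ring

/-- For any real `x` and `a > 0`,
`|x|^a · sgn(x) = (Γ(a+1)/(2πi)) ∫_{1+iℝ} (e^{zx} − e^{-zx})/z^{a+1} dz`,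
with `z = 1 + i t`, `dz = i dt`, and the principal branch of `z^(a+1)`. -/
theorem abs_rpow_sign_eq_contour_integral (x a : ℝ) (ha : 0 < a) :
    ((|x| ^ a * Real.sign x : ℝ) : ℂ) =
      (Real.Gamma (a + 1) : ℂ) / (2 * Real.pi * Complex.I) *
        ∫ t : ℝ,
          (Complex.exp ((1 + t * Complex.I) * x) - Complex.exp (-((1 + t * Complex.I) * x))) /
              (1 + t * Complex.I) ^ ((a : ℂ) + 1) * Complex.I := by
  by_cases hx : x = 0
  · subst hx
    simp
  · have hsplit : ∀ t : ℝ,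
        (Complex.exp ((1 + t * Complex.I) * x) - Complex.exp (-((1 + t * Complex.I) * x))) /
            (1 + t * Complex.I) ^ ((a : ℂ) + 1) * Complex.I
          = Complex.exp ((1 + (t:ℝ) * I) * (x:ℝ)) / ((1:ℂ) + (t:ℝ) * I) ^ ((a:ℂ)+1) * I
            - Complex.exp ((1 + (t:ℝ) * I) * ((-x : ℝ):ℂ)) /
                ((1:ℂ) + (t:ℝ) * I) ^ ((a:ℂ)+1) * I := by
      intro t
      rw [show -((1 + (t:ℝ) * I) * (x:ℂ)) = (1 + (t:ℝ)*I) * ((-x:ℝ):ℂ) by push_cast; ring,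
        sub_div, sub_mul]
    rw [integral_congr_ae (Eventually.of_forall hsplit),
      integral_sub ((integrable_h ha x).mul_const I) ((integrable_h ha (-x)).mul_const I),
      integral_mul_const, integral_mul_const, Jval ha hx, Jval ha (neg_ne_zero.mpr hx)]
    have hΓ : Complex.Gamma ((a:ℂ)+1) = ((Real.Gamma (a+1)) : ℂ) := by
      rw [show ((a:ℂ)+1) = ((a+1:ℝ):ℂ) by push_cast; ring, Complex.Gamma_ofReal]
    have hΓne : ((Real.Gamma (a+1) : ℝ) : ℂ) ≠ 0 := by
      exact_mod_cast (Real.Gamma_pos_of_pos (by linarith : (0:ℝ) < a + 1)).ne'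
    have hπ : ((π:ℝ):ℂ) ≠ 0 := ofReal_ne_zero.mpr Real.pi_ne_zero
    rcases lt_or_gt_of_ne hx with h | h
    · have g1 : gfun a x = 0 :=
        Set.indicator_of_notMem (by simp only [mem_Ioi, not_lt]; linarith) _
      have g2 : gfun a (-x) = ((-x:ℝ):ℂ)^(a:ℂ) * Complex.exp (-((-x:ℝ):ℂ)) :=
        Set.indicator_of_mem (by simp only [mem_Ioi]; linarith) _
      rw [g1, g2, hΓ]
      have hsign : Real.sign x = -1 := Real.sign_of_neg h
      have habs : |x| = -x := abs_of_neg h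
      rw [hsign, habs]
      have hcp : (((-x) ^ a : ℝ) : ℂ) = ((-x:ℝ):ℂ) ^ (a:ℂ) := Complex.ofReal_cpow (by linarith) a
      have hec : Complex.exp ((-x:ℝ):ℂ) * Complex.exp (-((-x:ℝ):ℂ)) = 1 := by
        rw [← Complex.exp_add]; simp
      push_cast [hcp] at *
      field_simp
      have h1 : Complex.exp (-(x:ℂ)) * Complex.exp ((x:ℂ)) = 1 := by
        rw [← Complex.exp_add]; simp
      have h2 : Complex.exp (-(x:ℂ)) * Complex.exp (- -(x:ℂ)) = 1 := by
        rw [← Complex.exp_add]; simp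
      linear_combination ((-(x:ℂ))^((a:ℂ))) * h1
    · have g1 : gfun a (-x) = 0 :=
        Set.indicator_of_notMem (by simp only [mem_Ioi, not_lt]; linarith) _
      have g2 : gfun a x = ((x:ℝ):ℂ)^(a:ℂ) * Complex.exp (-((x:ℝ):ℂ)) :=
        Set.indicator_of_mem (by simp only [mem_Ioi]; linarith) _
      rw [g1, g2, hΓ]
      have hsign : Real.sign x = 1 := Real.sign_of_pos h
      have habs : |x| = x := abs_of_pos h
      rw [hsign, habs]
      have hcp : ((x ^ a : ℝ) : ℂ) = ((x:ℝ):ℂ) ^ (a:ℂ) := Complex.ofReal_cpow (by linarith) a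
      have hec : Complex.exp ((x:ℝ):ℂ) * Complex.exp (-((x:ℝ):ℂ)) = 1 := by
        rw [← Complex.exp_add]; simp
      push_cast [hcp] at *
      field_simp
      have h1 : Complex.exp ((x:ℂ)) * Complex.exp (-(x:ℂ)) = 1 := by
        rw [← Complex.exp_add]; simp
      have h2 : Complex.exp ((x:ℂ)) * Complex.exp (- -(x:ℂ)) = Complex.exp ((x:ℂ)) * Complex.exp ((x:ℂ)) := by
        norm_num
      linear_combination (-((x:ℂ))^((a:ℂ))) * h1
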